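/- For every clique set cl, the concretization of the star union of cl equals the star union of the concretization of cl: ↓(cl*) = (↓cl)*. -/
import Mathlib


variable {V : Type*} [DecidableEq V]

/-- `℘⁰(C)`: the set of nonempty subsets of a finite set `C`. -/
def pow0 (C : Finset V) : Set (Finset V) := {u | u ⊆ C ∧ u ≠ ∅}

/-- Concretization of a clique set: `↓cl = ⋃_{C ∈ cl} ℘⁰(C)`. -/
def conc (cl : Set (Finset V)) : Set (Finset V) := ⋃ C ∈ cl, pow0 C

/-- Binary union: `s₁ ⊎ s₂ = {a ∪ b : a ∈ s₁, b ∈ s₂}`. -/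
def bin (s₁ s₂ : Set (Finset V)) : Set (Finset V) :=
  {u | ∃ a ∈ s₁, ∃ b ∈ s₂, u = a ∪ b}

/-- Star union: all unions `⋃ T` over finite nonempty subfamilies `T ⊆ s`. -/
def starU (s : Set (Finset V)) : Set (Finset V) :=
  {u | ∃ T : Finset (Finset V), T.Nonempty ∧ ↑T ⊆ s ∧ u = T.sup id}

/-- `s_G`: the part of `s` relevant to `G` (groups intersecting `G`). -/
def relG (G : Finset V) (s : Set (Finset V)) : Set (Finset V) :=
  {u ∈ s | u ∩ G ≠ ∅}

/-- `rel̄(S, cl) = {C \ S : C ∈ cl} \ {∅}`. -/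
def relbar (S : Finset V) (cl : Set (Finset V)) : Set (Finset V) :=
  {d | (∃ C ∈ cl, d = C \ S) ∧ d ≠ ∅}

/-- `project(G, s) = {u ∩ G : u ∈ s} \ {∅}`. -/
def sproject (G : Finset V) (s : Set (Finset V)) : Set (Finset V) :=
  {d | (∃ u ∈ s, d = u ∩ G) ∧ d ≠ ∅}

/-- Abstract unification of the Sharing domain for `x = t`, `T` the variables of `t`. -/
def amgu (x : V) (T : Finset V) (s : Set (Finset V)) : Set (Finset V) :=
  (s \ relG ({x} ∪ T) s) ∪ bin (starU (relG {x} s)) (starU (relG T s))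

/-- The `extend` function of the Sharing domain. -/
def extendSh (Call : Set (Finset V)) (G : Finset V) (Prime : Set (Finset V)) :
    Set (Finset V) :=
  {u ∈ Call | u ∩ G = ∅} ∪ {u ∈ starU (relG G Call) | u ∩ G ∈ Prime}

/-- Union of all groups of `s` containing `x`, as a set of variables. -/
def occSet (s : Set (Finset V)) (x : V) : Set V :=
  ⋃ u ∈ {u ∈ s | x ∈ u}, (↑u : Set V)

/-- ↓(cl*) = (↓cl)* for every clique set. -/
theorem conc_starU (cl : Set (Finset V)) :
    conc (starU cl) = starU (conc cl) := by
  classical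
  have memconc : ∀ (v : Finset V), v ∈ conc cl ↔ ∃ C ∈ cl, v ⊆ C ∧ v ≠ ∅ := by
    intro v
    simp only [conc, pow0, Set.mem_iUnion, Set.mem_setOf_eq]
    tauto
  ext u
  constructor
  · intro hu
    rw [show conc (starU cl) = ⋃ C ∈ starU cl, pow0 C from rfl] at hu
    simp only [Set.mem_iUnion, pow0, Set.mem_setOf_eq] at hu
    obtain ⟨D, ⟨T, hTne, hTcl, rfl⟩, hsub, hne⟩ := hu
    refine ⟨(T.image (· ∩ u)).filter (· ≠ ∅), ?_, ?_, ?_⟩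
    · obtain ⟨x, hx⟩ := Finset.nonempty_iff_ne_empty.2 hne
      obtain ⟨C, hC, hxC⟩ := Finset.mem_sup.1 (hsub hx)
      refine ⟨C ∩ u, Finset.mem_filter.2 ⟨Finset.mem_image_of_mem _ hC, ?_⟩⟩
      intro h
      have : x ∈ C ∩ u := Finset.mem_inter.2 ⟨hxC, hx⟩
      simp [h] at this
    · intro v hv
      simp only [Finset.mem_coe, Finset.mem_filter, Finset.mem_image] at hv
      obtain ⟨⟨C, hC, rfl⟩, hne'⟩ := hv
      exact (memconc _).2 ⟨C, hTcl hC, Finset.inter_subset_left, hne'⟩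
    · apply Finset.Subset.antisymm
      · intro x hx
        obtain ⟨C, hC, hxC⟩ := Finset.mem_sup.1 (hsub hx)
        apply Finset.mem_sup.2
        refine ⟨C ∩ u, Finset.mem_filter.2 ⟨Finset.mem_image_of_mem _ hC, ?_⟩, Finset.mem_inter.2 ⟨hxC, hx⟩⟩
        intro h
        have : x ∈ C ∩ u := Finset.mem_inter.2 ⟨hxC, hx⟩
        simp [h] at this
      · intro x hx
        obtain ⟨v, hv, hxv⟩ := Finset.mem_sup.1 hx
        obtain ⟨C, _, rfl⟩ := Finset.mem_image.1 (Finset.mem_filter.1 hv).1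
        exact (Finset.mem_inter.1 hxv).2
  · rintro ⟨T, hTne, hTcl, rfl⟩
    have hch : ∀ t ∈ T, ∃ C, C ∈ cl ∧ t ⊆ C ∧ t ≠ ∅ := by
      intro t ht
      obtain ⟨C, hC, hsub, hne⟩ := (memconc _).1 (hTcl ht)
      exact ⟨C, hC, hsub, hne⟩
    choose! f hf using hch
    rw [show conc (starU cl) = ⋃ C ∈ starU cl, pow0 C from rfl]
    simp only [Set.mem_iUnion, pow0, Set.mem_setOf_eq]
    refine ⟨T.sup f, ⟨T.image f, hTne.image f, ?_, ?_⟩, ?_, ?_⟩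
    · intro v hv
      simp only [Finset.coe_image, Set.mem_image, Finset.mem_coe] at hv
      obtain ⟨t, ht, rfl⟩ := hv
      exact (hf t ht).1
    · rw [Finset.sup_image]; rfl
    · intro x hx
      obtain ⟨t, ht, hxt⟩ := Finset.mem_sup.1 hx
      exact Finset.mem_sup.2 ⟨t, ht, (hf t ht).2.1 hxt⟩
    · obtain ⟨t, ht⟩ := hTne
      intro h
      apply (hf t ht).2.2
      have hst : t ⊆ T.sup id := Finset.le_sup (f := id) ht
      rw [h] at hst
      exact Finset.subset_empty.1 hst
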